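/- Let X ⊂ ℝ^{n_x} be a nonempty compact set, let x : [0,∞) → ℝ^{n_x} be differentiable with x'(t) = f(x(t)) and x(t) ∈ X for all t ≥ 0, and let ẑ : [0,∞) → ℝ^{n_z} be differentiable with ẑ'(t) = A ẑ(t) + B h(x(t)) for all t ≥ 0. Let T̂ : ℝ^{n_x} → ℝ^{n_z} be continuously differentiable with PDE residual R, set R̄ := sup_{x∈X} ‖R(x)‖ and e_z(t) := ẑ(t) − T̂(x(t)). Let Q ∈ ℝ^{n_z×n_z} and P ∈ ℝ^{n_z×n_z} be symmetric positive definite with P A + Aᵀ P = −Q. Then for every ε ∈ (0,1), setting c := (1−ε)·λ_min(Q)/λ_max(P) and V₀ := e_z(0)ᵀ P e_z(0), one has for all t ≥ 0: ‖e_z(t)‖ ≤ √(V₀/λ_min(P))·e^{−ct/2} + √(1/(ε·c·λ_min(P)))·‖Q^{−1/2}P‖·R̄. -/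

import Mathlib

open Filter Matrix

/-- Euclidean space `ℝ^n`. -/
abbrev E (n : ℕ) := EuclideanSpace ℝ (Fin n)

/-- Smallest eigenvalue of a (Hermitian) real matrix. -/
noncomputable def lamMin {n : ℕ} (M : Matrix (Fin n) (Fin n) ℝ) : ℝ :=
  if h : M.IsHermitian then ⨅ i, h.eigenvalues i else 0

/-- Largest eigenvalue of a (Hermitian) real matrix. -/
noncomputable def lamMax {n : ℕ} (M : Matrix (Fin n) (Fin n) ℝ) : ℝ :=
  if h : M.IsHermitian then ⨆ i, h.eigenvalues i else 0

open scoped Classical in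
/-- The positive semidefinite square root `M^{1/2}` of a positive semidefinite matrix. -/
noncomputable def matSqrt {n : ℕ} (M : Matrix (Fin n) (Fin n) ℝ) : Matrix (Fin n) (Fin n) ℝ :=
  if h : M.PosSemidef then
    h.1.eigenvectorUnitary.1 * diagonal (fun i => Real.sqrt (h.1.eigenvalues i)) *
      (star h.1.eigenvectorUnitary : Matrix (Fin n) (Fin n) ℝ)
  else 0

/-- `M^{-1/2} := (M^{1/2})⁻¹`. -/
noncomputable def invSqrt {n : ℕ} (M : Matrix (Fin n) (Fin n) ℝ) : Matrix (Fin n) (Fin n) ℝ :=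
  (matSqrt M)⁻¹

/-- Operator norm of a matrix induced by the Euclidean norms. -/
noncomputable def opNorm {m n : ℕ} (M : Matrix (Fin m) (Fin n) ℝ) : ℝ :=
  ‖LinearMap.toContinuousLinearMap (Matrix.toEuclideanLin M)‖

/-- Matrix-vector multiplication as a map between Euclidean spaces. -/
def mv {m n : ℕ} (M : Matrix (Fin m) (Fin n) ℝ) (v : E n) : E m := WithLp.toLp 2 (M.mulVec v)

local notation "⟪" x ", " y "⟫" => @inner ℝ _ _ x y

lemma dp_inner {n : ℕ} (u v : E n) : u ⬝ᵥ v = ⟪u, v⟫ := by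
  simp [dotProduct, PiLp.inner_apply, RCLike.inner_apply, mul_comm]

lemma mv_dp {m n : ℕ} (M : Matrix (Fin m) (Fin n) ℝ) (u : E n) (v : E m) :
    mv M u ⬝ᵥ v = u ⬝ᵥ mv Mᵀ v := by
  show M.mulVec u ⬝ᵥ v = u ⬝ᵥ Mᵀ.mulVec v
  rw [Matrix.dotProduct_mulVec, Matrix.vecMul_transpose, dotProduct_comm]

lemma mv_mv {m n k : ℕ} (M : Matrix (Fin m) (Fin n) ℝ) (N : Matrix (Fin n) (Fin k) ℝ) (v : E k) :
    mv M (mv N v) = mv (M * N) v := by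
  unfold mv; rw [WithLp.ofLp_toLp, Matrix.mulVec_mulVec]

lemma mv_add {m n : ℕ} (M : Matrix (Fin m) (Fin n) ℝ) (u w : E n) :
    mv M (u + w) = mv M u + mv M w := by
  unfold mv; rw [WithLp.ofLp_add, Matrix.mulVec_add, WithLp.toLp_add]

lemma mv_sub {m n : ℕ} (M : Matrix (Fin m) (Fin n) ℝ) (u w : E n) :
    mv M (u - w) = mv M u - mv M w := by
  unfold mv
  rw [WithLp.ofLp_sub, Matrix.mulVec_sub, WithLp.toLp_sub]

lemma norm_mv_le {m n : ℕ} (M : Matrix (Fin m) (Fin n) ℝ) (v : E n) :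
    ‖mv M v‖ ≤ opNorm M * ‖v‖ := by
  have := (LinearMap.toContinuousLinearMap (Matrix.toEuclideanLin M)).le_opNorm v
  simpa [opNorm, mv, Matrix.toEuclideanLin_apply] using this

section spec
variable {n : ℕ} {M : Matrix (Fin n) (Fin n) ℝ}

lemma dp_mv_eq_sum (hM : M.IsHermitian) (v : E n) :
    v ⬝ᵥ mv M v = ∑ i, hM.eigenvalues i * ⟪hM.eigenvectorBasis i, v⟫ ^ 2 := by
  have hsym := (Matrix.isHermitian_iff_isSymmetric.1 hM)
  have hmv : mv M v = Matrix.toEuclideanLin M v := rfl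
  rw [dp_inner, hmv, ← (hM.eigenvectorBasis).sum_inner_mul_inner v (Matrix.toEuclideanLin M v)]
  refine Finset.sum_congr rfl fun i _ => ?_
  have h1 : ⟪hM.eigenvectorBasis i, Matrix.toEuclideanLin M v⟫
      = ⟪Matrix.toEuclideanLin M (hM.eigenvectorBasis i), v⟫ := (hsym _ _).symm ▸ rfl
  have h2 : Matrix.toEuclideanLin M (hM.eigenvectorBasis i)
      = hM.eigenvalues i • hM.eigenvectorBasis i := by
    apply (WithLp.equiv 2 _).injective
    exact hM.mulVec_eigenvectorBasis i
  rw [h1, h2, real_inner_smul_left, real_inner_comm v]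
  ring

lemma norm_sq_eq_sum (hM : M.IsHermitian) (v : E n) :
    ‖v‖ ^ 2 = ∑ i, ⟪hM.eigenvectorBasis i, v⟫ ^ 2 := by
  have := (hM.eigenvectorBasis).sum_inner_mul_inner v v
  rw [real_inner_self_eq_norm_sq] at this
  rw [← this]
  exact Finset.sum_congr rfl fun i _ => by rw [real_inner_comm v]; ring

lemma lamMin_le_eig (hM : M.IsHermitian) (i : Fin n) : lamMin M ≤ hM.eigenvalues i := by
  rw [lamMin, dif_pos hM]
  exact ciInf_le (Set.Finite.bddBelow (Set.finite_range _)) i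

lemma eig_le_lamMax (hM : M.IsHermitian) (i : Fin n) : hM.eigenvalues i ≤ lamMax M := by
  rw [lamMax, dif_pos hM]
  exact le_ciSup (Set.Finite.bddAbove (Set.finite_range _)) i

lemma spectral_lower (hM : M.IsHermitian) (v : E n) :
    lamMin M * ‖v‖ ^ 2 ≤ v ⬝ᵥ mv M v := by
  rw [dp_mv_eq_sum hM v, norm_sq_eq_sum hM v, Finset.mul_sum]
  exact Finset.sum_le_sum fun i _ =>
    mul_le_mul_of_nonneg_right (lamMin_le_eig hM i) (sq_nonneg _)

lemma spectral_upper (hM : M.IsHermitian) (v : E n) :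
    v ⬝ᵥ mv M v ≤ lamMax M * ‖v‖ ^ 2 := by
  rw [dp_mv_eq_sum hM v, norm_sq_eq_sum hM v, Finset.mul_sum]
  exact Finset.sum_le_sum fun i _ =>
    mul_le_mul_of_nonneg_right (eig_le_lamMax hM i) (sq_nonneg _)

lemma lamMin_pos [Nonempty (Fin n)] (hM : M.PosDef) : 0 < lamMin M := by
  rw [lamMin, dif_pos hM.isHermitian]
  obtain ⟨i, hi⟩ := Finite.exists_min hM.isHermitian.eigenvalues
  have : (⨅ j, hM.isHermitian.eigenvalues j) = hM.isHermitian.eigenvalues i :=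
    le_antisymm (ciInf_le (Set.Finite.bddBelow (Set.finite_range _)) i) (le_ciInf hi)
  rw [this]
  exact hM.eigenvalues_pos i

lemma lamMax_pos [Nonempty (Fin n)] (hM : M.PosDef) : 0 < lamMax M := by
  obtain i := Classical.arbitrary (Fin n)
  exact lt_of_lt_of_le (hM.eigenvalues_pos i) (eig_le_lamMax hM.isHermitian i)

lemma matSqrt_eq (hM : M.PosSemidef) : matSqrt M =
    hM.1.eigenvectorUnitary.1 * diagonal (fun i => Real.sqrt (hM.1.eigenvalues i)) *
      (star hM.1.eigenvectorUnitary : Matrix (Fin n) (Fin n) ℝ) := dif_pos hM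

lemma matSqrt_mul_self (hM : M.PosSemidef) : matSqrt M * matSqrt M = M := by
  rw [matSqrt_eq hM]
  conv_rhs => rw [hM.1.spectral_theorem, Unitary.conjStarAlgAut_apply]
  have hU : (star hM.1.eigenvectorUnitary : Matrix (Fin n) (Fin n) ℝ) *
      hM.1.eigenvectorUnitary.1 = 1 := Unitary.coe_star_mul_self _
  simp only [mul_assoc]
  rw [← mul_assoc _ (hM.1.eigenvectorUnitary.1), hU, one_mul, ← mul_assoc (diagonal _),
    diagonal_mul_diagonal]
  congr 3
  funext i
  simp [Real.mul_self_sqrt (hM.eigenvalues_nonneg i)]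

lemma matSqrt_transpose (hM : M.PosSemidef) : (matSqrt M)ᵀ = matSqrt M := by
  rw [← Matrix.conjTranspose_eq_transpose_of_trivial, matSqrt_eq hM]
  simp [Matrix.conjTranspose_mul, Matrix.star_eq_conjTranspose, mul_assoc]

lemma matSqrt_det_isUnit (hM : M.PosDef) : IsUnit (matSqrt M).det := by
  rw [isUnit_iff_ne_zero]
  intro h0
  have : ((matSqrt M) * (matSqrt M)).det = 0 := by rw [Matrix.det_mul, h0, mul_zero]
  rw [matSqrt_mul_self hM.posSemidef] at this
  exact (hM.det_pos).ne' this
end spec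

lemma young_ineq {u b K eps : ℝ} (hu : 0 ≤ u) (heps : 0 < eps) (hK : K * eps = b ^ 2) :
    -(u ^ 2) + 2 * b * u ≤ -(1 - eps) * u ^ 2 + K := by
  nlinarith [sq_nonneg (eps * u - b)]

lemma sqrt_add_le' {a b : ℝ} (ha : 0 ≤ a) (hb : 0 ≤ b) :
    Real.sqrt (a + b) ≤ Real.sqrt a + Real.sqrt b := by
  nlinarith [Real.sq_sqrt ha, Real.sq_sqrt hb, Real.sqrt_nonneg a, Real.sqrt_nonneg b,
    Real.sqrt_nonneg (a+b), Real.sq_sqrt (by linarith : (0:ℝ) ≤ a + b)]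

lemma gronwall {V V' : ℝ → ℝ} {c K : ℝ} (hc : 0 < c) (hK : 0 ≤ K)
    (hV : ∀ t ≥ (0:ℝ), HasDerivAt V (V' t) t)
    (hb : ∀ t ≥ (0:ℝ), V' t ≤ -c * V t + K) :
    ∀ t ≥ (0:ℝ), V t ≤ V 0 * Real.exp (-c * t) + K / c := by
  set g : ℝ → ℝ := fun t => (V t - K / c) * Real.exp (c * t) with hg
  have hg' : ∀ t ≥ (0:ℝ), HasDerivAt g ((V' t + c * (V t - K / c)) * Real.exp (c * t)) t := by
    intro t ht
    have h1 : HasDerivAt (fun s => V s - K / c) (V' t) t := (hV t ht).sub_const _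
    have h2 : HasDerivAt (fun s : ℝ => Real.exp (c * s)) (Real.exp (c * t) * c) t := by
      simpa using ((hasDerivAt_id t).const_mul c).exp
    have := h1.mul h2
    refine this.congr_deriv ?_
    ring
  have hanti : AntitoneOn g (Set.Ici 0) := by
    apply antitoneOn_of_deriv_nonpos (convex_Ici 0)
    · exact fun t ht => ((hg' t ht).continuousAt).continuousWithinAt
    · intro t ht
      rw [interior_Ici] at ht
      exact ((hg' t (le_of_lt ht)).differentiableAt).differentiableWithinAt
    · intro t ht
      rw [interior_Ici] at ht
      rw [(hg' t ht.le).deriv]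
      have := hb t ht.le
      have hexp : (0:ℝ) < Real.exp (c * t) := Real.exp_pos _
      have hcK : c * (K / c) = K := by field_simp
      nlinarith
  intro t ht
  have := hanti (Set.self_mem_Ici) (Set.mem_Ici.2 ht) ht
  simp only [hg, mul_zero, Real.exp_zero, mul_one] at this
  have hexp : (0:ℝ) < Real.exp (c * t) := Real.exp_pos _
  have h3 : V t - K / c ≤ (V 0 - K / c) * Real.exp (-c * t) := by
    rw [neg_mul, Real.exp_neg, ← div_eq_mul_inv, le_div_iff₀ hexp]
    exact this
  have hKc : 0 ≤ K / c := div_nonneg hK hc.le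
  nlinarith [Real.exp_pos (-c * t), (Real.exp_pos (-c*t)).le]

theorem stmt4 {nx ny nz : ℕ}
    (f : E nx → E nx) (hf : Continuous f)
    (h : E nx → E ny) (hh : Continuous h)
    (A : Matrix (Fin nz) (Fin nz) ℝ) (B : Matrix (Fin nz) (Fin ny) ℝ)
    (X : Set (E nx)) (hXne : X.Nonempty) (hXc : IsCompact X)
    (x : ℝ → E nx) (hx : ∀ t ≥ (0:ℝ), HasDerivAt x (f (x t)) t)
    (hxX : ∀ t ≥ (0:ℝ), x t ∈ X)
    (zh : ℝ → E nz)
    (hz : ∀ t ≥ (0:ℝ), HasDerivAt zh (mv A (zh t) + mv B (h (x t))) t)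
    (T : E nx → E nz) (hT : ContDiff ℝ 1 T)
    (R : E nx → E nz)
    (hR : ∀ p, R p = fderiv ℝ T p (f p) - mv A (T p) - mv B (h p))
    (Rbar : ℝ) (hRbar : Rbar = sSup ((fun p => ‖R p‖) '' X))
    (Q P : Matrix (Fin nz) (Fin nz) ℝ) (hQ : Q.PosDef) (hP : P.PosDef)
    (hLyap : P * A + Aᵀ * P = -Q)
    (ε : ℝ) (hε : ε ∈ Set.Ioo (0:ℝ) 1) :
    ∀ t ≥ (0:ℝ),
      ‖zh t - T (x t)‖ ≤
        Real.sqrt (((zh 0 - T (x 0)) ⬝ᵥ P.mulVec (zh 0 - T (x 0))) / lamMin P) *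
            Real.exp (-((1 - ε) * lamMin Q / lamMax P) * t / 2) +
          Real.sqrt (1 / (ε * ((1 - ε) * lamMin Q / lamMax P) * lamMin P)) *
            opNorm (invSqrt Q * P) * Rbar := by
  obtain ⟨hε0, hε1⟩ := hε
  -- continuity of R and basic facts about Rbar
  have hRc : Continuous R := by
    have h1 : Continuous fun p => fderiv ℝ T p (f p) :=
      (hT.continuous_fderiv one_ne_zero).clm_apply hf
    have h2 : Continuous fun p => mv A (T p) :=
      (LinearMap.toContinuousLinearMap (Matrix.toEuclideanLin A)).continuous.comp hT.continuous
    have h3 : Continuous fun p => mv B (h p) :=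
      (LinearMap.toContinuousLinearMap (Matrix.toEuclideanLin B)).continuous.comp hh
    have : R = fun p => fderiv ℝ T p (f p) - mv A (T p) - mv B (h p) := funext hR
    rw [this]
    exact (h1.sub h2).sub h3
  have hbdd : BddAbove ((fun p => ‖R p‖) '' X) := (hXc.image hRc.norm).bddAbove
  have hRbar0 : 0 ≤ Rbar := by
    obtain ⟨p0, hp0⟩ := hXne
    exact le_trans (norm_nonneg (R p0)) (hRbar ▸ le_csSup hbdd ⟨p0, hp0, rfl⟩)
  have hRle : ∀ t ≥ (0:ℝ), ‖R (x t)‖ ≤ Rbar := fun t ht =>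
    hRbar ▸ le_csSup hbdd ⟨x t, hxX t ht, rfl⟩
  have hNN0 : (0:ℝ) ≤ opNorm (invSqrt Q * P) := norm_nonneg _
  rcases Nat.eq_zero_or_pos nz with hnz | hnz
  · -- degenerate case nz = 0
    subst hnz
    intro t ht
    have h0 : zh t - T (x t) = 0 := Subsingleton.elim _ _
    rw [h0, norm_zero]
    have e1 : (0:ℝ) ≤ Real.sqrt (((zh 0 - T (x 0)) ⬝ᵥ P.mulVec (zh 0 - T (x 0))) / lamMin P) *
        Real.exp (-((1 - ε) * lamMin Q / lamMax P) * t / 2) :=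
      mul_nonneg (Real.sqrt_nonneg _) (Real.exp_pos _).le
    have e2 : (0:ℝ) ≤ Real.sqrt (1 / (ε * ((1 - ε) * lamMin Q / lamMax P) * lamMin P)) *
        opNorm (invSqrt Q * P) * Rbar :=
      mul_nonneg (mul_nonneg (Real.sqrt_nonneg _) hNN0) hRbar0
    linarith
  -- main case
  haveI : Nonempty (Fin nz) := ⟨⟨0, hnz⟩⟩
  have hQh := hQ.isHermitian
  have hPh := hP.isHermitian
  have hPt : Pᵀ = P := by
    rw [← Matrix.conjTranspose_eq_transpose_of_trivial]; exact hPh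
  set e : ℝ → E nz := fun t => zh t - T (x t) with he
  have he' : ∀ t ≥ (0:ℝ), HasDerivAt e (mv A (e t) - R (x t)) t := by
    intro t ht
    have hTd : HasDerivAt (fun s => T (x s)) (fderiv ℝ T (x t) (f (x t))) t :=
      ((hT.differentiable one_ne_zero) (x t)).hasFDerivAt.comp_hasDerivAt t (hx t ht)
    have hsub := (hz t ht).sub hTd
    refine hsub.congr_deriv ?_
    rw [hR, he]
    simp only []
    rw [mv_sub]
    abel
  set c := (1 - ε) * lamMin Q / lamMax P with hc
  have hlPmin : 0 < lamMin P := lamMin_pos hP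
  have hlPmax : 0 < lamMax P := lamMax_pos hP
  have hlQmin : 0 < lamMin Q := lamMin_pos hQ
  have hcpos : 0 < c := div_pos (mul_pos (by linarith) hlQmin) hlPmax
  set S := matSqrt Q with hSdef
  have hSS : S * S = Q := matSqrt_mul_self hQ.posSemidef
  have hSt : Sᵀ = S := matSqrt_transpose hQ.posSemidef
  have hSu : IsUnit S.det := matSqrt_det_isUnit hQ
  have hSinv : invSqrt Q * S = 1 := Matrix.nonsing_inv_mul S hSu
  have hSinvT : (invSqrt Q)ᵀ = invSqrt Q := by
    show S⁻¹ᵀ = S⁻¹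
    rw [Matrix.transpose_nonsing_inv, hSt]
  set NN := opNorm (invSqrt Q * P) with hNN
  set K := NN ^ 2 * Rbar ^ 2 / ε with hK
  have hK0 : 0 ≤ K := by positivity
  set V : ℝ → ℝ := fun t => e t ⬝ᵥ mv P (e t) with hV
  set V' : ℝ → ℝ := fun t =>
    (mv A (e t) - R (x t)) ⬝ᵥ mv P (e t) + e t ⬝ᵥ mv P (mv A (e t) - R (x t)) with hV'
  have hVd : ∀ t ≥ (0:ℝ), HasDerivAt V (V' t) t := by
    intro t ht
    have h1 : HasDerivAt (fun s => mv P (e s)) (mv P (mv A (e t) - R (x t))) t :=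
      (LinearMap.toContinuousLinearMap
        (Matrix.toEuclideanLin P)).hasFDerivAt.comp_hasDerivAt t (he' t ht)
    have h3 := HasDerivAt.inner ℝ (he' t ht) h1
    have hfun : V = fun s => ⟪e s, mv P (e s)⟫ := funext fun s => dp_inner _ _
    rw [hfun]
    refine h3.congr_deriv ?_
    rw [hV']
    simp only []
    rw [dp_inner, dp_inner, add_comm]
  have hVb : ∀ t ≥ (0:ℝ), V' t ≤ -c * V t + K := by
    intro t ht
    set a := e t with ha
    set r := R (x t) with hr
    have hsym_dp : a ⬝ᵥ mv P r = r ⬝ᵥ mv P a := by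
      rw [dotProduct_comm, mv_dp, hPt]
    have hid : V' t = -(a ⬝ᵥ mv Q a) - 2 * (r ⬝ᵥ mv P a) := by
      rw [hV']
      simp only []
      have e1 : (mv A a - r) ⬝ᵥ mv P a = a ⬝ᵥ mv (Aᵀ * P) a - r ⬝ᵥ mv P a := by
        rw [WithLp.ofLp_sub, sub_dotProduct, mv_dp A a (mv P a), mv_mv]
      have e2 : a ⬝ᵥ mv P (mv A a - r) = a ⬝ᵥ mv (P * A) a - r ⬝ᵥ mv P a := by
        rw [mv_sub, WithLp.ofLp_sub (x := mv P (mv A a)) (y := mv P r), dotProduct_sub, mv_mv, hsym_dp]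
      rw [e1, e2]
      have e3 : a ⬝ᵥ mv (Aᵀ * P) a + a ⬝ᵥ mv (P * A) a = -(a ⬝ᵥ mv Q a) := by
        have : mv (Aᵀ * P) a + mv (P * A) a = mv (-Q) a := by
          rw [← hLyap]
          show WithLp.toLp 2 ((Aᵀ * P) *ᵥ a.ofLp) + WithLp.toLp 2 ((P * A) *ᵥ a.ofLp)
            = WithLp.toLp 2 ((P * A + Aᵀ * P) *ᵥ a.ofLp)
          rw [Matrix.add_mulVec, WithLp.toLp_add]
          abel
        calc a ⬝ᵥ mv (Aᵀ * P) a + a ⬝ᵥ mv (P * A) a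
            = a ⬝ᵥ (mv (Aᵀ * P) a + mv (P * A) a) := (dotProduct_add _ _ _).symm
          _ = a ⬝ᵥ mv (-Q) a := by rw [← WithLp.ofLp_add, this]
          _ = -(a ⬝ᵥ mv Q a) := by
              show a ⬝ᵥ (-Q) *ᵥ a = -(a ⬝ᵥ Q *ᵥ a)
              rw [Matrix.neg_mulVec, dotProduct_neg]
      linarith [e3]
    have hQa : a ⬝ᵥ mv Q a = ‖mv S a‖ ^ 2 := by
      rw [← hSS, ← mv_mv]
      have : mv S a ⬝ᵥ mv S a = a ⬝ᵥ mv S (mv S a) := by rw [mv_dp, hSt]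
      rw [← this, dp_inner, real_inner_self_eq_norm_sq]
    have hw : r ⬝ᵥ mv P a = (mv (invSqrt Q * P) r) ⬝ᵥ (mv S a) := by
      rw [← mv_mv, mv_dp (invSqrt Q) (mv P r) (mv S a), hSinvT, mv_mv, hSinv]
      have : mv (1 : Matrix (Fin nz) (Fin nz) ℝ) a = a := by
          unfold mv; rw [Matrix.one_mulVec, WithLp.toLp_ofLp]
      rw [this, dotProduct_comm (mv P r) a]
      exact hsym_dp.symm
    have hCS : |(mv (invSqrt Q * P) r) ⬝ᵥ (mv S a)| ≤ NN * Rbar * ‖mv S a‖ := by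
      rw [dp_inner]
      calc |⟪mv (invSqrt Q * P) r, mv S a⟫| ≤ ‖mv (invSqrt Q * P) r‖ * ‖mv S a‖ :=
            abs_real_inner_le_norm _ _
        _ ≤ (NN * ‖r‖) * ‖mv S a‖ :=
            mul_le_mul_of_nonneg_right (norm_mv_le _ _) (norm_nonneg _)
        _ ≤ NN * Rbar * ‖mv S a‖ := by
            have hN0 : (0:ℝ) ≤ NN := norm_nonneg _
            exact mul_le_mul_of_nonneg_right
              (mul_le_mul_of_nonneg_left (hRle t ht) hN0) (norm_nonneg _)
    have h5 : lamMin Q * ‖a‖ ^ 2 ≤ ‖mv S a‖ ^ 2 := hQa ▸ spectral_lower hQh a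
    have h6 : V t ≤ lamMax P * ‖a‖ ^ 2 := spectral_upper hPh a
    have hcl : c * lamMax P = (1 - ε) * lamMin Q := div_mul_cancel₀ _ hlPmax.ne'
    set u := ‖mv S a‖ with hu
    have hu0 : 0 ≤ u := norm_nonneg _
    have step1 : V' t ≤ -(u ^ 2) + 2 * (NN * Rbar) * u := by
      rw [hid, hQa, hw]
      have := neg_abs_le ((mv (invSqrt Q * P) r) ⬝ᵥ (mv S a))
      linarith [hCS]
    have hKε : K * ε = (NN * Rbar) ^ 2 := by
      rw [hK]; field_simp
    have step2 : -(u ^ 2) + 2 * (NN * Rbar) * u ≤ -(1 - ε) * u ^ 2 + K :=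
      young_ineq hu0 hε0 hKε
    have step3 : -(1 - ε) * u ^ 2 ≤ -c * V t := by
      have i1 : c * V t ≤ c * (lamMax P * ‖a‖ ^ 2) :=
        mul_le_mul_of_nonneg_left h6 hcpos.le
      have i2 : (1 - ε) * (lamMin Q * ‖a‖ ^ 2) ≤ (1 - ε) * u ^ 2 :=
        mul_le_mul_of_nonneg_left h5 (by linarith)
      have i3 : c * (lamMax P * ‖a‖ ^ 2) = (1 - ε) * (lamMin Q * ‖a‖ ^ 2) := by
        rw [← mul_assoc, hcl, mul_assoc]
      linarith
    linarith
  have hVle := gronwall hcpos hK0 hVd hVb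
  intro t ht
  have hVt := hVle t ht
  have hV0 : 0 ≤ V 0 := by
    have := spectral_lower hPh (e 0)
    nlinarith [norm_nonneg (e 0), sq_nonneg ‖e 0‖]
  have h7 : lamMin P * ‖e t‖ ^ 2 ≤ V t := spectral_lower hPh (e t)
  have h8 : ‖e t‖ ≤ Real.sqrt (V t / lamMin P) := by
    have h81 : ‖e t‖ ^ 2 ≤ V t / lamMin P := (le_div_iff₀ hlPmin).2 (by linarith)
    calc ‖e t‖ = Real.sqrt (‖e t‖ ^ 2) := (Real.sqrt_sq (norm_nonneg _)).symm
      _ ≤ _ := Real.sqrt_le_sqrt h81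
  have h9 : V t / lamMin P ≤ (V 0 * Real.exp (-c * t) + K / c) / lamMin P := by gcongr
  have h10 : ‖e t‖ ≤ Real.sqrt ((V 0 * Real.exp (-c * t) + K / c) / lamMin P) :=
    h8.trans (Real.sqrt_le_sqrt h9)
  have hsplit : (V 0 * Real.exp (-c * t) + K / c) / lamMin P
      = V 0 / lamMin P * Real.exp (-c * t) + K / (c * lamMin P) := by
    rw [add_div, mul_div_right_comm, div_div]
  have h11 : ‖e t‖ ≤ Real.sqrt (V 0 / lamMin P * Real.exp (-c * t))
      + Real.sqrt (K / (c * lamMin P)) := by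
    rw [hsplit] at h10
    exact h10.trans (sqrt_add_le'
      (mul_nonneg (div_nonneg hV0 hlPmin.le) (Real.exp_pos _).le)
      (div_nonneg hK0 (mul_pos hcpos hlPmin).le))
  have hA1 : Real.sqrt (V 0 / lamMin P * Real.exp (-c * t))
      = Real.sqrt (V 0 / lamMin P) * Real.exp (-c * t / 2) := by
    rw [Real.sqrt_mul (div_nonneg hV0 hlPmin.le)]
    congr 1
    have h := Real.sqrt_mul_self (Real.exp_pos (-c * t / 2)).le
    rw [← Real.exp_add] at h
    rw [show -c * t / 2 + -c * t / 2 = -c * t by ring] at h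
    exact h
  have hA2 : Real.sqrt (K / (c * lamMin P))
      = Real.sqrt (1 / (ε * c * lamMin P)) * NN * Rbar := by
    rw [hK, show NN ^ 2 * Rbar ^ 2 / ε / (c * lamMin P)
      = 1 / (ε * c * lamMin P) * (NN * Rbar) ^ 2 by field_simp,
      Real.sqrt_mul (le_of_lt (div_pos one_pos (mul_pos (mul_pos hε0 hcpos) hlPmin))),
      Real.sqrt_sq (mul_nonneg hNN0 hRbar0), ← mul_assoc]
  show ‖e t‖ ≤ Real.sqrt (V 0 / lamMin P) * Real.exp (-c * t / 2)
      + Real.sqrt (1 / (ε * c * lamMin P)) * NN * Rbar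
  rw [← hA1, ← hA2]
  exact h11
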